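/- (Strong source block effective rank bound.) Let K ∈ ℝ^{m×m} be a nonzero symmetric positive semidefinite block-diagonal matrix with blocks C_1, …, C_s, each of size at most d. Suppose there is an index i such that tr(C_i) ≥ Σ_{j≠i} tr(C_j) and λ_max(C_i) ≥ λ_max(C_j) for all j. Then the effective rank satisfies r_e(K) ≤ 2d. -/

import Mathlib

open Matrix BigOperators
open scoped Classical

noncomputable section

/-- Spectral norm (largest singular value / ℓ²→ℓ² operator norm; for a positive semidefinite
matrix this is its largest eigenvalue `λ_max`). -/
noncomputable def spec {n : Type*} [Fintype n] [DecidableEq n] (A : Matrix n n ℝ) : ℝ :=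
  ‖Matrix.toEuclideanCLM (𝕜 := ℝ) A‖

/-- Effective rank: `r_e(A) = tr(A)/‖A‖₂`. -/
noncomputable def effRank {n : Type*} [Fintype n] [DecidableEq n] (A : Matrix n n ℝ) : ℝ :=
  A.trace / spec A

/-- **strong source block effective rank bound.** For a nonzero positive
semidefinite block-diagonal matrix `K` with blocks `C_1, …, C_s`, each of size at most `d`,
if some block `C_i` satisfies `tr(C_i) ≥ Σ_{j≠i} tr(C_j)` and `λ_max(C_i) ≥ λ_max(C_j)` for all
`j`, then `r_e(K) ≤ 2d`. -/
-- diagonal entry ≤ spec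
lemma diag_le_spec {n : Type*} [Fintype n] [DecidableEq n] (A : Matrix n n ℝ) (k : n) :
    A k k ≤ spec A := by
  have h1 : A k k = inner ℝ (EuclideanSpace.single k (1:ℝ))
      (Matrix.toEuclideanCLM (𝕜 := ℝ) A (EuclideanSpace.single k 1)) := by
    rw [EuclideanSpace.inner_single_left]
    have : Matrix.toEuclideanCLM (𝕜 := ℝ) A (EuclideanSpace.single k 1) =
        (WithLp.equiv 2 _).symm (A *ᵥ Pi.single k 1) := by
      rfl
    rw [this]
    simp [Matrix.mulVec_single]
  calc A k k = (inner ℝ (EuclideanSpace.single k (1:ℝ))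
      (Matrix.toEuclideanCLM (𝕜 := ℝ) A (EuclideanSpace.single k 1)) : ℝ) := h1
    _ ≤ ‖EuclideanSpace.single k (1:ℝ)‖ *
        ‖Matrix.toEuclideanCLM (𝕜 := ℝ) A (EuclideanSpace.single k 1)‖ :=
      real_inner_le_norm _ _
    _ ≤ ‖EuclideanSpace.single k (1:ℝ)‖ *
        (‖Matrix.toEuclideanCLM (𝕜 := ℝ) A‖ * ‖EuclideanSpace.single k (1:ℝ)‖) := by
      gcongr; exact ContinuousLinearMap.le_opNorm _ _
    _ = spec A := by
      rw [EuclideanSpace.norm_single, norm_one, mul_one, one_mul]; rfl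

section blk
variable {s : ℕ} {sizes : Fin s → ℕ}

/-- extend a vector on block `i` by zero -/
def embed (sizes : Fin s → ℕ) (i : Fin s) (z : Fin (sizes i) → ℝ) :
    (Σ j, Fin (sizes j)) → ℝ :=
  fun p => if h : p.1 = i then z (Fin.cast (congrArg sizes h) p.2) else 0

lemma sum_embed_sq (i : Fin s) (z : Fin (sizes i) → ℝ) :
    ∑ p : Σ j, Fin (sizes j), ‖embed sizes i z p‖ ^ 2 = ∑ k : Fin (sizes i), ‖z k‖ ^ 2 := by
  rw [← Finset.univ_sigma_univ, Finset.sum_sigma]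
  have h : ∀ j : Fin s, ∑ k : Fin (sizes j), ‖embed sizes i z ⟨j, k⟩‖ ^ 2 =
      if j = i then ∑ k : Fin (sizes i), ‖z k‖ ^ 2 else 0 := by
    intro j
    by_cases h : j = i
    · subst h; simp [embed]
    · simp [embed, h]
  simp_rw [h]
  simp

lemma norm_embed (i : Fin s) (z : Fin (sizes i) → ℝ) :
    ‖(WithLp.equiv 2 ((Σ j, Fin (sizes j)) → ℝ)).symm (embed sizes i z)‖ =
      ‖(WithLp.equiv 2 (Fin (sizes i) → ℝ)).symm z‖ := by
  rw [EuclideanSpace.norm_eq, EuclideanSpace.norm_eq]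
  congr 1
  simpa using sum_embed_sq i z

lemma mulVec_embed (C : ∀ j, Matrix (Fin (sizes j)) (Fin (sizes j)) ℝ) (i : Fin s)
    (z : Fin (sizes i) → ℝ) :
    Matrix.blockDiagonal' C *ᵥ embed sizes i z = embed sizes i (C i *ᵥ z) := by
  funext p
  obtain ⟨j, k⟩ := p
  rw [Matrix.mulVec, dotProduct, ← Finset.univ_sigma_univ, Finset.sum_sigma]
  by_cases h : j = i
  · subst h
    rw [Finset.sum_eq_single j]
    · simp [embed, Matrix.blockDiagonal'_apply, Matrix.mulVec, dotProduct]
    · intro b _ hb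
      apply Finset.sum_eq_zero
      intro k' _
      simp [embed, Matrix.blockDiagonal'_apply, hb.symm, Ne.symm hb]
    · simp
  · have : ∀ b : Fin s, ∑ k' : Fin (sizes b),
        Matrix.blockDiagonal' C ⟨j, k⟩ ⟨b, k'⟩ * embed sizes i z ⟨b, k'⟩ = 0 := by
      intro b
      apply Finset.sum_eq_zero
      intro k' _
      by_cases hb : b = i
      · subst hb
        simp [Matrix.blockDiagonal'_apply, h]
      · simp [embed, hb]
    simp_rw [this]
    simp [embed, h]

lemma spec_block_le (C : ∀ j, Matrix (Fin (sizes j)) (Fin (sizes j)) ℝ) (i : Fin s) :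
    spec (C i) ≤ spec (Matrix.blockDiagonal' C) := by
  rw [spec, spec]
  apply ContinuousLinearMap.opNorm_le_bound _ (norm_nonneg _)
  intro y
  set zf : Fin (sizes i) → ℝ := WithLp.equiv 2 _ y with hz
  have hy : y = (WithLp.equiv 2 (Fin (sizes i) → ℝ)).symm zf := by simp [hz]
  calc ‖Matrix.toEuclideanCLM (𝕜 := ℝ) (C i) y‖
      = ‖(WithLp.equiv 2 (Fin (sizes i) → ℝ)).symm (C i *ᵥ zf)‖ := by
        rw [hy]; rfl
    _ = ‖(WithLp.equiv 2 ((Σ j, Fin (sizes j)) → ℝ)).symm (embed sizes i (C i *ᵥ zf))‖ := by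
        rw [norm_embed]
    _ = ‖Matrix.toEuclideanCLM (𝕜 := ℝ) (Matrix.blockDiagonal' C)
          ((WithLp.equiv 2 ((Σ j, Fin (sizes j)) → ℝ)).symm (embed sizes i zf))‖ := by
        rw [← mulVec_embed]; rfl
    _ ≤ ‖Matrix.toEuclideanCLM (𝕜 := ℝ) (Matrix.blockDiagonal' C)‖ *
          ‖(WithLp.equiv 2 ((Σ j, Fin (sizes j)) → ℝ)).symm (embed sizes i zf)‖ :=
        ContinuousLinearMap.le_opNorm _ _
    _ = ‖Matrix.toEuclideanCLM (𝕜 := ℝ) (Matrix.blockDiagonal' C)‖ * ‖y‖ := by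
        rw [norm_embed, ← hy]

end blk


theorem ssb_effective_rank_bound (s d : ℕ) (sizes : Fin s → ℕ)
    (hsizes : ∀ j, sizes j ≤ d)
    (C : ∀ j, Matrix (Fin (sizes j)) (Fin (sizes j)) ℝ)
    (hPSD : (Matrix.blockDiagonal' C).PosSemidef)
    (hK0 : Matrix.blockDiagonal' C ≠ 0)
    (i : Fin s)
    (htr : ∑ j ∈ Finset.univ.erase i, (C j).trace ≤ (C i).trace)
    (hmax : ∀ j, spec (C j) ≤ spec (C i)) :
    effRank (Matrix.blockDiagonal' C) ≤ 2 * d := by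
  rw [effRank]
  set K := Matrix.blockDiagonal' C with hK
  have hspec_pos : 0 < spec K := by
    rw [spec]
    rw [norm_pos_iff]
    intro h
    apply hK0
    have := Matrix.toEuclideanCLM (n := Σ j, Fin (sizes j)) (𝕜 := ℝ) |>.injective
    exact this (by simpa using h)
  have hCi_spec : spec (C i) ≤ spec K := spec_block_le C i
  have htrCi : (C i).trace ≤ (d : ℝ) * spec K := by
    have h1 : (C i).trace ≤ (sizes i : ℝ) * spec (C i) := by
      rw [Matrix.trace]
      calc ∑ k, (C i).diag k ≤ ∑ _k : Fin (sizes i), spec (C i) :=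
            Finset.sum_le_sum fun k _ => diag_le_spec (C i) k
        _ = (sizes i : ℝ) * spec (C i) := by simp [mul_comm]
    calc (C i).trace ≤ (sizes i : ℝ) * spec (C i) := h1
      _ ≤ (d : ℝ) * spec K := by
          apply mul_le_mul (by exact_mod_cast hsizes i) hCi_spec (norm_nonneg _)
            (Nat.cast_nonneg d)
  have htrK : K.trace ≤ 2 * ((d : ℝ) * spec K) := by
    rw [hK, Matrix.trace_blockDiagonal']
    rw [← Finset.add_sum_erase _ _ (Finset.mem_univ i)]
    calc (C i).trace + ∑ j ∈ Finset.univ.erase i, (C j).trace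
        ≤ (C i).trace + (C i).trace := by linarith
      _ = 2 * (C i).trace := by ring
      _ ≤ 2 * ((d : ℝ) * spec K) := by linarith
  rw [div_le_iff₀ hspec_pos]
  calc K.trace ≤ 2 * ((d : ℝ) * spec K) := htrK
    _ = 2 * d * spec K := by ring
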